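/- Let V = ℂ^m, G = O(V), and suppose Λ ∈ (V^{⊗r_c})^{G,det} is harmonic with (Λ,Λ) ≠ 0. If r < r_c then (V^{⊗r})^{G,det} = 0. -/

import Mathlib

open scoped BigOperators

namespace EnhBrauer

/-- Coordinates of a tensor in `V^{⊗r}` for `V = ℂ^m`, w.r.t. the orthonormal basis. -/
abbrev Tens (m r : ℕ) := (Fin r → Fin m) → ℂ

/-- `A` is an orthogonal matrix: `A.transpose * A = 1`. -/
def IsOrth {m : ℕ} (A : Matrix (Fin m) (Fin m) ℂ) : Prop := A.transpose * A = 1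

/-- The diagonal action of a matrix on `V^{⊗r}` in coordinates. -/
noncomputable def act {m r : ℕ} (A : Matrix (Fin m) (Fin m) ℂ) (x : Tens m r) : Tens m r :=
  fun f => ∑ f' : Fin r → Fin m, (∏ i, A (f i) (f' i)) * x f'

/-- Action of a permutation on `V^{⊗r}` by permuting the tensor factors. -/
def permAct {m r : ℕ} (σ : Equiv.Perm (Fin r)) (x : Tens m r) : Tens m r :=
  fun f => x (f ∘ σ)

/-- The symmetric bilinear form on `V^{⊗r}` extending `(·,·)` multiplicatively. -/
noncomputable def form {m r : ℕ} (x y : Tens m r) : ℂ :=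
  ∑ f : Fin r → Fin m, x f * y f

/-- `Č = ∑ i, e i ⊗ e i ∈ V ⊗ V`. -/
def cC (m : ℕ) : Tens m 2 := fun f => if f 0 = f 1 then 1 else 0

/-- `Ĉ : V ⊗ V → ℂ`, `v ⊗ w ↦ (v, w)`. -/
noncomputable def hatC {m : ℕ} (x : Tens m 2) : ℂ := ∑ i : Fin m, x (fun _ => i)

/-- `Č^{⊗d} ∈ V^{⊗2d}`. -/
def cCpow (m d : ℕ) : Tens m (2 * d) :=
  fun f => ∏ i : Fin d,
    (if f ⟨2 * i, by have := i.isLt; omega⟩ = f ⟨2 * i + 1, by have := i.isLt; omega⟩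
      then (1 : ℂ) else 0)

/-- Tensor product (concatenation) of tensors. -/
def tmul {m r s : ℕ} (x : Tens m r) (y : Tens m s) : Tens m (r + s) :=
  fun f => x (fun i => f (Fin.castAdd s i)) * y (fun j => f (Fin.natAdd r j))

/-- `Λ = (m!)⁻¹ ∑_{σ ∈ S_m} ε(σ) σ · (e 1 ⊗ ⋯ ⊗ e m)`. -/
noncomputable def Lam (m : ℕ) : Tens m m :=
  fun f => ((m.factorial : ℂ))⁻¹ *
    ∑ σ : Equiv.Perm (Fin m), ((Equiv.Perm.sign σ : ℤ) : ℂ) * (if ∀ i, f i = σ i then 1 else 0)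

/-- The total antisymmetrizer `Σ_r = ∑_{π ∈ S_r} ε(π) π` on `V^{⊗r}`. -/
noncomputable def SigmaA (m r : ℕ) : Tens m r → Tens m r :=
  fun x f => ∑ σ : Equiv.Perm (Fin r), ((Equiv.Perm.sign σ : ℤ) : ℂ) * x (f ∘ σ)

/-- `x ∈ V^{⊗r}` is harmonic: contracting any two distinct tensor factors with
the form gives `0`. -/
def Harmonic {m r : ℕ} (x : Tens m r) : Prop :=
  ∀ a b : Fin r, a ≠ b → ∀ f : Fin r → Fin m,
    ∑ j : Fin m, x (Function.update (Function.update f a j) b j) = 0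

lemma act_add {m r : ℕ} (A : Matrix (Fin m) (Fin m) ℂ) (x y : Tens m r) :
    act A (x + y) = act A x + act A y := by
  funext f
  simp [act, mul_add, Finset.sum_add_distrib]

lemma act_zero {m r : ℕ} (A : Matrix (Fin m) (Fin m) ℂ) :
    act A (0 : Tens m r) = 0 := by
  funext f; simp [act]

lemma act_smul {m r : ℕ} (A : Matrix (Fin m) (Fin m) ℂ) (c : ℂ) (x : Tens m r) :
    act A (c • x) = c • act A x := by
  funext f
  simp only [act, Pi.smul_apply, smul_eq_mul, Finset.mul_sum]
  exact Finset.sum_congr rfl fun f' _ => by ring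

/-- The submodule of tensors in `V^{⊗r}` invariant under all matrices satisfying `P`. -/
noncomputable def invSub (m r : ℕ) (P : Matrix (Fin m) (Fin m) ℂ → Prop) :
    Submodule ℂ (Tens m r) where
  carrier := {x | ∀ A, P A → act A x = x}
  add_mem' := by intro x y hx hy A hA; rw [act_add, hx A hA, hy A hA]
  zero_mem' := by intro A hA; exact act_zero A
  smul_mem' := by intro c x hx A hA; rw [act_smul, hx A hA]

/-- The submodule of linear maps `V^{⊗s} → V^{⊗t}` equivariant for all matrices
satisfying `P`. -/
noncomputable def homSub (m s t : ℕ) (P : Matrix (Fin m) (Fin m) ℂ → Prop) :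
    Submodule ℂ (Tens m s →ₗ[ℂ] Tens m t) where
  carrier := {T | ∀ A, P A → ∀ x, T (act A x) = act A (T x)}
  add_mem' := by
    intro T S hT hS A hA x
    simp [hT A hA x, hS A hA x, act_add]
  zero_mem' := by
    intro A hA x
    simp [act_zero]
  smul_mem' := by
    intro c T hT A hA x
    simp [hT A hA x, act_smul]

/-! ### Auxiliary machinery for `stmt_11` -/

namespace Aux

open Finset Function

variable {m n : ℕ}

/-- number of slots of `f` with value `j` -/
def cnt (f : Fin n → Fin m) (j : Fin m) : ℕ := (Finset.univ.filter (fun i => f i = j)).card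

lemma sum_cnt (f : Fin n → Fin m) : ∑ j : Fin m, cnt f j = n := by
  classical
  have := Finset.card_eq_sum_card_fiberwise
    (f := f) (s := Finset.univ) (t := Finset.univ) (fun i _ => Finset.mem_univ (f i))
  simpa [cnt, Finset.card_univ] using this.symm

lemma cnt_comp_perm (σ : Equiv.Perm (Fin n)) (f : Fin n → Fin m) (v : Fin m) :
    cnt (f ∘ σ) v = cnt f v := by
  classical
  unfold cnt
  apply Finset.card_bij (fun i _ => σ i)
  · intro a ha
    simp only [Finset.mem_filter, Finset.mem_univ, true_and, Function.comp_apply] at ha ⊢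
    exact ha
  · intro a _ b _ h
    exact σ.injective h
  · intro b hb
    simp only [Finset.mem_filter, Finset.mem_univ, true_and] at hb
    exact ⟨σ.symm b, by simp [hb], by simp⟩

lemma swap_as_comp {i i' : Fin n} (hii : i ≠ i') (f : Fin n → Fin m) :
    Function.update (Function.update f i (f i')) i' (f i) = f ∘ (Equiv.swap i i') := by
  funext x
  by_cases hx : x = i'
  · rw [hx, Function.update_self]
    simp [Equiv.swap_apply_right]
  · by_cases hx2 : x = i
    · rw [hx2, Function.update_of_ne hii, Function.update_self]
      simp [Equiv.swap_apply_left]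
    · rw [Function.update_of_ne hx, Function.update_of_ne hx2]
      simp [Equiv.swap_apply_of_ne_of_ne hx2 hx]

lemma cnt_swapvals {i i' : Fin n} (hii : i ≠ i') (f : Fin n → Fin m) (v : Fin m) :
    cnt (Function.update (Function.update f i (f i')) i' (f i)) v = cnt f v := by
  rw [swap_as_comp hii f]
  exact cnt_comp_perm _ f v

/-- indicator sum -/
lemma sum_ind (f : Fin n → Fin m) (j : Fin m) (c : ℂ) :
    (∑ i : Fin n, if f i = j then c else 0) = (cnt f j : ℂ) * c := by
  classical
  rw [Finset.sum_ite, Finset.sum_const, Finset.sum_const_zero, add_zero, nsmul_eq_mul]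
  rfl

/-- collapse a sum over functions agreeing with `f` off `i` -/
lemma sum_update_eq (i : Fin n) (f : Fin n → Fin m) (F : (Fin n → Fin m) → ℂ) :
    (∑ f' : Fin n → Fin m, if (∀ i', i' ≠ i → f' i' = f i') then F f' else 0)
      = ∑ v : Fin m, F (Function.update f i v) := by
  classical
  have h1 : ∀ v : Fin m, F (Function.update f i v)
      = ∑ f' : Fin n → Fin m, if f' = Function.update f i v then F f' else 0 := by
    intro v
    rw [Finset.sum_ite_eq' Finset.univ (Function.update f i v) F]
    simp
  rw [Finset.sum_congr rfl (fun v (_ : v ∈ Finset.univ) => h1 v), Finset.sum_comm]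
  apply Finset.sum_congr rfl
  intro f' _
  by_cases hP : ∀ i', i' ≠ i → f' i' = f i'
  · have hv : ∀ v : Fin m, (if f' = Function.update f i v then F f' else 0)
        = (if v = f' i then F f' else 0) := by
      intro v
      by_cases hvi : v = f' i
      · subst hvi
        rw [if_pos rfl, if_pos]
        funext x
        by_cases hx : x = i
        · subst hx; rw [Function.update_self]
        · rw [Function.update_of_ne hx]; exact hP x hx
      · rw [if_neg hvi, if_neg]
        intro hc
        apply hvi
        rw [hc, Function.update_self]
    rw [Finset.sum_congr rfl (fun v (_ : v ∈ Finset.univ) => hv v),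
      Finset.sum_ite_eq' Finset.univ (f' i) (fun _ => F f'), if_pos (Finset.mem_univ _),
      if_pos hP]
  · rw [if_neg hP]
    refine (Finset.sum_eq_zero ?_).symm
    intro v _
    rw [if_neg]
    intro hc
    apply hP
    intro i' hi'
    rw [hc, Function.update_of_ne hi']

/-- value-swapping involution reindex -/
lemma sum_swapvals (i : Fin n) {a b : Fin m} (hab : a ≠ b) (G : (Fin n → Fin m) → ℂ) :
    (∑ f : Fin n → Fin m, if f i = a then G (Function.update f i b) else 0)
      = ∑ f : Fin n → Fin m, if f i = b then G f else 0 := by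
  classical
  set ψ : (Fin n → Fin m) → (Fin n → Fin m) :=
    fun f => Function.update f i (if f i = a then b else if f i = b then a else f i) with hψdef
  have hψi : ∀ f, ψ f i = (if f i = a then b else if f i = b then a else f i) := by
    intro f; rw [hψdef]; exact Function.update_self i _ f
  have hψx : ∀ f x, x ≠ i → ψ f x = f x := by
    intro f x hx; rw [hψdef]; exact Function.update_of_ne hx _ f
  have hinv : Function.Involutive ψ := by
    intro f
    funext x
    by_cases hx : x = i
    · rw [hx, hψi, hψi]
      by_cases ha : f i = a
      · rw [if_pos ha, if_neg (Ne.symm hab), if_pos rfl, ha]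
      · rw [if_neg ha]
        by_cases hb : f i = b
        · rw [if_pos hb, if_pos rfl, hb]
        · rw [if_neg hb, if_neg ha, if_neg hb]
    · rw [hψx _ _ hx, hψx _ _ hx]
  refine Fintype.sum_bijective ψ hinv.bijective _ _ ?_
  intro f
  by_cases ha : f i = a
  · have h1 : ψ f = Function.update f i b := by
      simp only [hψdef]
      rw [if_pos ha]
    have h2 : ψ f i = b := by rw [h1]; exact Function.update_self i b f
    rw [if_pos ha, if_pos h2, h1]
  · have h2 : ψ f i ≠ b := by
      rw [hψi, if_neg ha]
      by_cases hb : f i = b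
      · rw [if_pos hb]; exact hab
      · rw [if_neg hb]; exact hb
    rw [if_neg ha, if_neg h2]

end Aux

open Finset in
private lemma sum_if_const' {α : Type*} [Fintype α] (P : Prop) [Decidable P] (g : α → ℂ) :
    (∑ a : α, if P then g a else 0) = if P then ∑ a : α, g a else 0 := by
  split_ifs <;> simp

/-! ### Phase 1 : diagonal sign matrices -/

lemma act_diagonal {m s : ℕ} (ε : Fin m → ℂ) (y : Tens m s) (f : Fin s → Fin m) :
    act (Matrix.diagonal ε) y f = (∏ i, ε (f i)) * y f := by
  unfold act
  rw [Finset.sum_eq_single f]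
  · congr 1
    apply Finset.prod_congr rfl
    intro i _
    rw [Matrix.diagonal_apply, if_pos rfl]
  · intro f' _ hne
    have hex : ∃ i, f i ≠ f' i := by
      by_contra h; push_neg at h; exact hne (funext fun i => (h i).symm)
    obtain ⟨i0, hi0⟩ := hex
    rw [Finset.prod_eq_zero (Finset.mem_univ i0), zero_mul]
    rw [Matrix.diagonal_apply, if_neg hi0]
  · intro h; exact absurd (Finset.mem_univ f) h

lemma sign_vanish {m s : ℕ} (y : Tens m s)
    (hy : ∀ A : Matrix (Fin m) (Fin m) ℂ, IsOrth A → act A y = A.det • y)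
    (f : Fin s → Fin m) (j0 : Fin m) (hev : Even (Aux.cnt f j0)) : y f = 0 := by
  classical
  set ε : Fin m → ℂ := fun a => if a = j0 then -1 else 1 with hε
  have hsq : ∀ a, ε a * ε a = 1 := by
    intro a; by_cases h : a = j0 <;> simp [hε, h]
  have horth : IsOrth (Matrix.diagonal ε) := by
    unfold IsOrth
    rw [Matrix.diagonal_transpose, Matrix.diagonal_mul_diagonal]
    have h1 : (fun i => ε i * ε i) = fun _ => (1 : ℂ) := funext hsq
    rw [h1, Matrix.diagonal_one]
  have hdet : (Matrix.diagonal ε).det = -1 := by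
    rw [Matrix.det_diagonal, Finset.prod_eq_single j0]
    · simp [hε]
    · intro b _ hb; simp [hε, hb]
    · intro h; exact absurd (Finset.mem_univ j0) h
  have hact := congrFun (hy _ horth) f
  rw [act_diagonal] at hact
  have hprod : (∏ i, ε (f i)) = 1 := by
    have h2 : (∏ i, ε (f i)) = (-1 : ℂ) ^ (Aux.cnt f j0) := by
      simp only [hε]
      rw [Finset.prod_ite, Finset.prod_const, Finset.prod_const_one, mul_one]
      rfl
    rw [h2, hev.neg_one_pow]
  rw [hprod, hdet, one_mul, Pi.smul_apply, smul_eq_mul] at hact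
  have h3 : (2 : ℂ) * y f = 0 := by linear_combination hact
  exact (mul_eq_zero.mp h3).resolve_left two_ne_zero

/-! ### Phase 3 : the Casimir / positivity argument -/

/-- the operator moving one occurrence of value `j` to value `k` -/
noncomputable def Aop {m n : ℕ} (j k : Fin m) (x : Tens m n) : Tens m n :=
  fun f => ∑ i : Fin n, if f i = j then x (Function.update f i k) else 0

lemma Aop_diag {m n : ℕ} (j : Fin m) (x : Tens m n) (f : Fin n → Fin m) :
    Aop j j x f = (Aux.cnt f j : ℂ) * x f := by
  unfold Aop
  have h1 : ∀ i : Fin n, (if f i = j then x (Function.update f i j) else 0)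
      = (if f i = j then x f else 0) := by
    intro i
    by_cases h : f i = j
    · rw [if_pos h, if_pos h]
      congr 1
      rw [← h]
      exact Function.update_eq_self i f
    · rw [if_neg h, if_neg h]
  rw [Finset.sum_congr rfl (fun i (_ : i ∈ Finset.univ) => h1 i)]
  exact Aux.sum_ind f j (x f)

lemma Aop_comp_expand {m n : ℕ} {j k : Fin m} (hjk : j ≠ k) (x : Tens m n) (f : Fin n → Fin m) :
    Aop j k (Aop j k x) f
      = ∑ i : Fin n, (if f i = j then
          (∑ i' ∈ Finset.univ.erase i,
            if f i' = j then x (Function.update (Function.update f i k) i' k) else 0)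
        else 0) := by
  unfold Aop
  apply Finset.sum_congr rfl
  intro i _
  by_cases h : f i = j
  · rw [if_pos h, if_pos h]
    rw [← Finset.sum_erase_add _ _ (Finset.mem_univ i)]
    have hterm : (if Function.update f i k i = j then
        x (Function.update (Function.update f i k) i k) else 0) = 0 := by
      rw [Function.update_self, if_neg (Ne.symm hjk)]
    rw [hterm, add_zero]
    apply Finset.sum_congr rfl
    intro i' hi'
    have hne : i' ≠ i := Finset.ne_of_mem_erase hi'
    rw [Function.update_of_ne hne]
  · rw [if_neg h, if_neg h]

lemma casval {m n : ℕ} (L : Tens m n)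
    (hD : ∀ j k : Fin m, Aop j k L = Aop k j L)
    (hH : Harmonic L) (f : Fin n → Fin m) :
    ∑ j : Fin m, ∑ k : Fin m, Aop j k (Aop k j L) f = (n : ℂ) * L f := by
  classical
  have step : ∀ j : Fin m, (∑ k : Fin m, Aop j k (Aop k j L) f) = (Aux.cnt f j : ℂ) * L f := by
    intro j
    rw [← Finset.sum_erase_add _ _ (Finset.mem_univ j)]
    have hdiag : Aop j j (Aop j j L) f = (Aux.cnt f j : ℂ) * ((Aux.cnt f j : ℂ) * L f) := by
      rw [Aop_diag, Aop_diag]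
    have hoff : (∑ k ∈ Finset.univ.erase j, Aop j k (Aop k j L) f)
        = -((Aux.cnt f j : ℂ) * ((Aux.cnt f j : ℂ) - 1)) * L f := by
      have h1 : ∀ k ∈ Finset.univ.erase j, Aop j k (Aop k j L) f
          = ∑ i : Fin n, (if f i = j then
              (∑ i' ∈ Finset.univ.erase i,
                if f i' = j then L (Function.update (Function.update f i k) i' k) else 0)
            else 0) := by
        intro k hk
        have hjk : j ≠ k := (Finset.ne_of_mem_erase hk).symm
        rw [hD k j]
        exact Aop_comp_expand hjk L f
      rw [Finset.sum_congr rfl h1, Finset.sum_comm]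
      have h2 : ∀ i : Fin n,
          (∑ k ∈ Finset.univ.erase j, if f i = j then
            (∑ i' ∈ Finset.univ.erase i,
              if f i' = j then L (Function.update (Function.update f i k) i' k) else 0) else 0)
          = (if f i = j then ((Aux.cnt f j : ℂ) - 1) * (-(L f)) else 0) := by
        intro i
        by_cases hi : f i = j
        · simp only [if_pos hi]
          have h3 : ∀ i' ∈ Finset.univ.erase i,
              (∑ k ∈ Finset.univ.erase j,
                if f i' = j then L (Function.update (Function.update f i k) i' k) else 0)
              = (if f i' = j then -(L f) else 0) := by
            intro i' hi'
            by_cases hfi' : f i' = j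
            · simp only [if_pos hfi']
              have hii' : i ≠ i' := fun h => (Finset.ne_of_mem_erase hi') h.symm
              have hH0 := hH i i' hii' f
              rw [Finset.sum_erase_eq_sub (Finset.mem_univ j), hH0, zero_sub]
              congr 2
              have e1 : Function.update f i j = f := by rw [← hi]; exact Function.update_eq_self i f
              rw [e1, ← hfi']
              exact Function.update_eq_self i' f
            · simp only [if_neg hfi', Finset.sum_const_zero]
          rw [Finset.sum_comm, Finset.sum_congr rfl h3,
            Finset.sum_erase_eq_sub (Finset.mem_univ i), Aux.sum_ind, if_pos hi]
          ring
        · simp only [if_neg hi, Finset.sum_const_zero]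
      rw [Finset.sum_congr rfl (fun i (_ : i ∈ Finset.univ) => h2 i), Aux.sum_ind]
      ring
    rw [hoff, hdiag]
    ring
  rw [Finset.sum_congr rfl (fun j (_ : j ∈ Finset.univ) => step j), ← Finset.sum_mul]
  congr 1
  rw [← Nat.cast_sum]
  exact congrArg _ (Aux.sum_cnt f)

/-- restriction of a tensor to a fixed multiplicity type -/
noncomputable def tw {m n : ℕ} (w : Fin m → ℕ) (L : Tens m n) : Tens m n :=
  fun f => if (∀ v, Aux.cnt f v = w v) then L f else 0

lemma Aop_comp_tw {m n : ℕ} (w : Fin m → ℕ) (L : Tens m n) (j k : Fin m) (f : Fin n → Fin m) :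
    Aop j k (Aop k j (tw w L)) f
      = if (∀ v, Aux.cnt f v = w v) then Aop j k (Aop k j L) f else 0 := by
  classical
  have key : ∀ i i' : Fin n, f i = j → Function.update f i k i' = k →
      (∀ v, Aux.cnt (Function.update (Function.update f i k) i' j) v = Aux.cnt f v) := by
    intro i i' hi hc v
    by_cases hii : i' = i
    · subst hii
      rw [Function.update_idem]
      rw [← hi, Function.update_eq_self]
    · have hfi' : f i' = k := by rwa [Function.update_of_ne hii] at hc
      rw [show Function.update (Function.update f i k) i' j
            = Function.update (Function.update f i (f i')) i' (f i) by rw [hfi', hi]]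
      exact Aux.cnt_swapvals (fun h => hii h.symm) f v
  by_cases hw : ∀ v, Aux.cnt f v = w v
  · rw [if_pos hw]
    simp only [Aop, tw]
    apply Finset.sum_congr rfl
    intro i _
    by_cases hi : f i = j
    · rw [if_pos hi, if_pos hi]
      apply Finset.sum_congr rfl
      intro i' _
      by_cases hc : Function.update f i k i' = k
      · rw [if_pos hc, if_pos hc, if_pos]
        intro v
        rw [key i i' hi hc v]
        exact hw v
      · rw [if_neg hc, if_neg hc]
    · rw [if_neg hi, if_neg hi]
  · rw [if_neg hw]
    simp only [Aop, tw]
    apply Finset.sum_eq_zero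
    intro i _
    by_cases hi : f i = j
    · rw [if_pos hi]
      apply Finset.sum_eq_zero
      intro i' _
      by_cases hc : Function.update f i k i' = k
      · rw [if_pos hc, if_neg]
        intro hcon
        apply hw
        intro v
        rw [← key i i' hi hc v]
        exact hcon v
      · rw [if_neg hc]
    · rw [if_neg hi]

lemma Aop_diag_tw {m n : ℕ} (w : Fin m → ℕ) (L : Tens m n) (j : Fin m) (f : Fin n → Fin m) :
    Aop j j (tw w L) f = (w j : ℂ) * tw w L f := by
  rw [Aop_diag]
  by_cases h : ∀ v, Aux.cnt f v = w v
  · rw [h j]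
  · have h0 : tw w L f = 0 := if_neg h
    rw [h0, mul_zero, mul_zero]

lemma casval_tw {m n : ℕ} (L : Tens m n)
    (hD : ∀ j k : Fin m, Aop j k L = Aop k j L)
    (hH : Harmonic L) (w : Fin m → ℕ) (f : Fin n → Fin m) :
    ∑ j : Fin m, ∑ k : Fin m, Aop j k (Aop k j (tw w L)) f = (n : ℂ) * tw w L f := by
  classical
  have h1 : ∀ j : Fin m, (∑ k : Fin m, Aop j k (Aop k j (tw w L)) f)
      = if (∀ v, Aux.cnt f v = w v) then (∑ k : Fin m, Aop j k (Aop k j L) f) else 0 := by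
    intro j
    rw [Finset.sum_congr rfl (fun k (_ : k ∈ Finset.univ) => Aop_comp_tw w L j k f)]
    exact sum_if_const' _ _
  rw [Finset.sum_congr rfl (fun j (_ : j ∈ Finset.univ) => h1 j), sum_if_const']
  unfold tw
  split_ifs with h
  · exact casval L hD hH f
  · rw [mul_zero]

lemma Aop_adjoint {m n : ℕ} {j k : Fin m} (hjk : j ≠ k) (x y : Tens m n) :
    ∑ f : Fin n → Fin m, Aop j k x f * (starRingEnd ℂ) (y f)
      = ∑ f : Fin n → Fin m, x f * (starRingEnd ℂ) (Aop k j y f) := by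
  classical
  have step1 : (∑ f : Fin n → Fin m, Aop j k x f * (starRingEnd ℂ) (y f))
      = ∑ i : Fin n, ∑ f : Fin n → Fin m,
          (if f i = j then x (Function.update f i k) * (starRingEnd ℂ) (y f) else 0) := by
    unfold Aop
    rw [← Finset.sum_comm]
    apply Finset.sum_congr rfl
    intro f _
    rw [Finset.sum_mul]
    apply Finset.sum_congr rfl
    intro i _
    rw [ite_mul, zero_mul]
  have step2 : ∀ i : Fin n,
      (∑ f : Fin n → Fin m,
          (if f i = j then x (Function.update f i k) * (starRingEnd ℂ) (y f) else 0))
      = ∑ f : Fin n → Fin m,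
          (if f i = k then x f * (starRingEnd ℂ) (y (Function.update f i j)) else 0) := by
    intro i
    have h0 := Aux.sum_swapvals i hjk
      (G := fun g => x g * (starRingEnd ℂ) (y (Function.update g i j)))
    refine Eq.trans ?_ h0
    apply Finset.sum_congr rfl
    intro f _
    by_cases hi : f i = j
    · rw [if_pos hi, if_pos hi]
      have e1 : Function.update (Function.update f i k) i j = f := by
        rw [Function.update_idem, ← hi]
        exact Function.update_eq_self i f
      rw [e1]
    · rw [if_neg hi, if_neg hi]
  rw [step1, Finset.sum_congr rfl (fun i (_ : i ∈ Finset.univ) => step2 i), Finset.sum_comm]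
  apply Finset.sum_congr rfl
  intro f _
  unfold Aop
  rw [map_sum, Finset.mul_sum]
  apply Finset.sum_congr rfl
  intro i _
  rw [apply_ite (starRingEnd ℂ), map_zero, mul_ite, mul_zero]

/-- squared norm of a tensor -/
noncomputable def Sq {m n : ℕ} (y : Tens m n) : ℝ := ∑ f, Complex.normSq (y f)

lemma Sq_nonneg {m n : ℕ} (y : Tens m n) : 0 ≤ Sq y :=
  Finset.sum_nonneg (fun f _ => Complex.normSq_nonneg (y f))

lemma Sq_cast {m n : ℕ} (y : Tens m n) :
    ((Sq y : ℝ) : ℂ) = ∑ f, y f * (starRingEnd ℂ) (y f) := by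
  rw [Sq, Complex.ofReal_sum]
  exact Finset.sum_congr rfl fun f _ => (Complex.mul_conj (y f)).symm

lemma phase3 {m n : ℕ} (L : Tens m n)
    (hS : ∀ (f : Fin n → Fin m) (j : Fin m), Even (Aux.cnt f j) → L f = 0)
    (hD : ∀ j k : Fin m, Aop j k L = Aop k j L)
    (hH : Harmonic L) (hmn : m < n) : L = 0 := by
  classical
  by_contra hL
  have hex : ∃ f, L f ≠ 0 := by
    by_contra h; push_neg at h; exact hL (funext h)
  obtain ⟨f0, hf0⟩ := hex
  set w : Fin m → ℕ := fun v => Aux.cnt f0 v with hw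
  have hodd : ∀ v, Odd (w v) := by
    intro v
    rcases Nat.even_or_odd (w v) with he | ho
    · exact absurd (hS f0 v he) hf0
    · exact ho
  set T : Tens m n := tw w L with hT
  have hTf0 : T f0 = L f0 := if_pos (fun v => rfl)
  -- the main (complex) identity
  have hmain : (n : ℂ) * ((Sq T : ℝ) : ℂ)
      = ∑ j : Fin m, ∑ k : Fin m, ((Sq (Aop k j T) : ℝ) : ℂ) := by
    have c1 : (n : ℂ) * ((Sq T : ℝ) : ℂ)
        = ∑ f, (∑ j : Fin m, ∑ k : Fin m, Aop j k (Aop k j T) f) * (starRingEnd ℂ) (T f) := by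
      rw [Sq_cast, Finset.mul_sum]
      apply Finset.sum_congr rfl
      intro f _
      rw [casval_tw L hD hH w f]
      ring
    have c2 : (∑ f, (∑ j : Fin m, ∑ k : Fin m, Aop j k (Aop k j T) f) * (starRingEnd ℂ) (T f))
        = ∑ j : Fin m, ∑ k : Fin m,
            ∑ f, Aop j k (Aop k j T) f * (starRingEnd ℂ) (T f) := by
      have e1 : ∀ f : Fin n → Fin m,
          (∑ j : Fin m, ∑ k : Fin m, Aop j k (Aop k j T) f) * (starRingEnd ℂ) (T f)
          = ∑ j : Fin m, ∑ k : Fin m, Aop j k (Aop k j T) f * (starRingEnd ℂ) (T f) := by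
        intro f
        rw [Finset.sum_mul]
        exact Finset.sum_congr rfl fun j _ => Finset.sum_mul _ _ _
      rw [Finset.sum_congr rfl (fun f (_ : f ∈ Finset.univ) => e1 f), Finset.sum_comm]
      exact Finset.sum_congr rfl fun j _ => Finset.sum_comm
    have c3 : ∀ j k : Fin m,
        (∑ f, Aop j k (Aop k j T) f * (starRingEnd ℂ) (T f)) = ((Sq (Aop k j T) : ℝ) : ℂ) := by
      intro j k
      by_cases hjk : j = k
      · subst hjk
        rw [Sq_cast]
        apply Finset.sum_congr rfl
        intro f _
        rw [Aop_diag, Aop_diag]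
        have : (starRingEnd ℂ) ((Aux.cnt f j : ℂ) * T f)
            = (Aux.cnt f j : ℂ) * (starRingEnd ℂ) (T f) := by
          rw [map_mul, map_natCast]
        rw [this]
        ring
      · rw [Aop_adjoint hjk, Sq_cast]
    rw [c1, c2]
    apply Finset.sum_congr rfl
    intro j _
    exact Finset.sum_congr rfl fun k _ => c3 j k
  have hreal : (n : ℝ) * Sq T = ∑ j : Fin m, ∑ k : Fin m, Sq (Aop k j T) := by
    have h0 : (((n : ℝ) * Sq T : ℝ) : ℂ)
        = ((∑ j : Fin m, ∑ k : Fin m, Sq (Aop k j T) : ℝ) : ℂ) := by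
      push_cast
      push_cast at hmain
      convert hmain using 2
    exact_mod_cast h0
  have hSqpos : 0 < Sq T := by
    have h1 : Complex.normSq (T f0) ≤ Sq T :=
      Finset.single_le_sum (fun f _ => Complex.normSq_nonneg (T f)) (Finset.mem_univ f0)
    have h2 : 0 < Complex.normSq (T f0) := Complex.normSq_pos.mpr (by rw [hTf0]; exact hf0)
    linarith
  have hdiagbound : ∀ j : Fin m, ((w j : ℝ)) ^ 2 * Sq T ≤ ∑ k : Fin m, Sq (Aop k j T) := by
    intro j
    have h1 : Sq (Aop j j T) = (w j : ℝ) ^ 2 * Sq T := by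
      unfold Sq
      rw [Finset.mul_sum]
      apply Finset.sum_congr rfl
      intro f _
      rw [Aop_diag_tw]
      rw [show ((w j : ℕ) : ℂ) = (((w j : ℕ) : ℝ) : ℂ) by push_cast; ring]
      rw [Complex.normSq_mul, Complex.normSq_ofReal]
      ring
    rw [← h1]
    exact Finset.single_le_sum (fun k _ => Sq_nonneg (Aop k j T)) (Finset.mem_univ j)
  have hfinal : ∑ j : Fin m, (w j) ^ 2 ≤ n := by
    have h2 : (∑ j : Fin m, ((w j : ℝ)) ^ 2) * Sq T ≤ (n : ℝ) * Sq T := by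
      rw [Finset.sum_mul, hreal]
      exact Finset.sum_le_sum (fun j _ => hdiagbound j)
    have h3 : (∑ j : Fin m, ((w j : ℝ)) ^ 2) ≤ (n : ℝ) :=
      le_of_mul_le_mul_right h2 hSqpos
    exact_mod_cast h3
  have hsum : ∑ j : Fin m, w j = n := Aux.sum_cnt f0
  obtain ⟨j0, hj0⟩ : ∃ j0 : Fin m, 3 ≤ w j0 := by
    by_contra hcon
    push_neg at hcon
    have hone : ∀ j, w j = 1 := by
      intro j
      obtain ⟨c, hc⟩ := hodd j
      have := hcon j
      omega
    rw [Finset.sum_congr rfl (fun j (_ : j ∈ Finset.univ) => hone j)] at hsum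
    simp only [Finset.sum_const, Finset.card_univ, Fintype.card_fin, smul_eq_mul,
      mul_one] at hsum
    omega
  have hge : (∑ j : Fin m, w j) + 6 ≤ ∑ j : Fin m, (w j) ^ 2 := by
    have hterm : ∀ j ∈ Finset.univ, w j + (if j = j0 then 6 else 0) ≤ (w j) ^ 2 := by
      intro j _
      by_cases hj : j = j0
      · subst hj
        rw [if_pos rfl]
        nlinarith [hj0]
      · rw [if_neg hj]
        have := (hodd j).pos
        nlinarith
    calc (∑ j : Fin m, w j) + 6
        = ∑ j : Fin m, (w j + if j = j0 then 6 else 0) := by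
          rw [Finset.sum_add_distrib, Finset.sum_ite_eq' Finset.univ j0,
            if_pos (Finset.mem_univ j0)]
      _ ≤ ∑ j : Fin m, (w j) ^ 2 := Finset.sum_le_sum hterm
  rw [hsum] at hge
  have : n + 6 ≤ n := le_trans hge hfinal
  omega

/-! ### Phase 2 : rotation matrices and the `so(m)` relations -/

section Phase2

open Polynomial Matrix

/-- polynomial rotation matrix (numerator of the rational rotation family) -/
noncomputable def Aq (m : ℕ) (j k : Fin m) : Matrix (Fin m) (Fin m) (Polynomial ℂ) :=
  Matrix.of fun a b =>
    if a = j then (if b = j then 1 - X ^ 2 else if b = k then C 2 * X else 0)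
    else if a = k then (if b = j then -(C 2 * X) else if b = k then 1 - X ^ 2 else 0)
    else (if a = b then 1 + X ^ 2 else 0)

lemma Aq_coeff_zero {m : ℕ} {j k : Fin m} (hjk : j ≠ k) (a b : Fin m) :
    (Aq m j k a b).coeff 0 = if a = b then 1 else 0 := by
  simp only [Aq, Matrix.of_apply]
  split_ifs with h1 h2 h3 h4 h5 h6 h7 h8 h9 h10 h11 <;>
    simp_all [coeff_sub, coeff_add, coeff_one, coeff_X_pow, coeff_C_mul, coeff_X_zero]

lemma Aq_coeff_one {m : ℕ} {j k : Fin m} (hjk : j ≠ k) (a b : Fin m) :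
    (Aq m j k a b).coeff 1
      = if a = j ∧ b = k then 2 else if a = k ∧ b = j then -2 else 0 := by
  simp only [Aq, Matrix.of_apply]
  split_ifs with h1 h2 h3 h4 h5 h6 h7 h8 h9 h10 h11 <;>
    simp_all [coeff_sub, coeff_add, coeff_one, coeff_X_pow, coeff_C_mul, coeff_X_one]

private lemma tSBM {m : ℕ} {R : Type*} [Zero R] (i j : Fin m) (c : R) :
    (Matrix.single i j c)ᵀ = Matrix.single j i c := by
  apply Matrix.ext
  intro a b
  simp only [Matrix.transpose_apply, Matrix.single, Matrix.of_apply]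
  exact if_congr and_comm rfl rfl

private lemma SBM_apply {m : ℕ} {R : Type*} [Zero R] (i j a b : Fin m) (c : R) :
    Matrix.single i j c a b = if a = i ∧ b = j then c else 0 := by
  show (if i = a ∧ j = b then c else 0) = _
  exact if_congr ⟨fun ⟨h1, h2⟩ => ⟨h1.symm, h2.symm⟩, fun ⟨h1, h2⟩ => ⟨h1.symm, h2.symm⟩⟩ rfl rfl

lemma Aq_eq {m : ℕ} {j k : Fin m} (hjk : j ≠ k) :
    Aq m j k = ((1 + X ^ 2 : Polynomial ℂ)) • (1 : Matrix (Fin m) (Fin m) (Polynomial ℂ))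
      + ((-(C 2 * X ^ 2) : Polynomial ℂ)) • (Matrix.single j j (1 : Polynomial ℂ)
          + Matrix.single k k (1 : Polynomial ℂ))
      + ((C 2 * X : Polynomial ℂ)) • (Matrix.single j k (1 : Polynomial ℂ)
          - Matrix.single k j (1 : Polynomial ℂ)) := by
  apply Matrix.ext
  intro a b
  have hC2 : (C 2 : Polynomial ℂ) = 2 := map_ofNat C 2
  simp only [Aq, Matrix.of_apply, Matrix.add_apply, Matrix.sub_apply, Matrix.smul_apply,
    Matrix.one_apply, SBM_apply, smul_eq_mul, hC2]
  by_cases haj : a = j <;> by_cases hbj : b = j <;> by_cases hak : a = k <;>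
    by_cases hbk : b = k <;>
    (try simp_all) <;>
    first
      | ring1
      | simp_all [eq_comm]

lemma Aq_orth {m : ℕ} {j k : Fin m} (hjk : j ≠ k) :
    (Aq m j k)ᵀ * Aq m j k
      = (((1 + X ^ 2 : Polynomial ℂ)) ^ 2) • (1 : Matrix (Fin m) (Fin m) (Polynomial ℂ)) := by
  have hmulsmul : ∀ (x y : Polynomial ℂ) (M N : Matrix (Fin m) (Fin m) (Polynomial ℂ)),
      (x • M) * (y • N) = (x * y) • (M * N) := by
    intro x y M N
    rw [Matrix.smul_mul, Matrix.mul_smul, smul_smul]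
  set P : Matrix (Fin m) (Fin m) (Polynomial ℂ) :=
    Matrix.single j j (1 : Polynomial ℂ) + Matrix.single k k (1 : Polynomial ℂ)
    with hP
  set Jm : Matrix (Fin m) (Fin m) (Polynomial ℂ) :=
    Matrix.single j k (1 : Polynomial ℂ) - Matrix.single k j (1 : Polynomial ℂ)
    with hJ
  have hPt : Pᵀ = P := by
    rw [hP, Matrix.transpose_add, tSBM, tSBM]
  have hJt : Jmᵀ = -Jm := by
    rw [hJ, Matrix.transpose_sub, tSBM, tSBM]
    abel
  have hPP : P * P = P := by
    rw [hP, add_mul, mul_add, mul_add, Matrix.single_mul_single_same,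
      Matrix.single_mul_single_of_ne (h := hjk), Matrix.single_mul_single_of_ne (h := hjk.symm),
      Matrix.single_mul_single_same, one_mul]
    abel
  have hPJ : P * Jm = Jm := by
    rw [hP, hJ, add_mul, mul_sub, mul_sub, Matrix.single_mul_single_same,
      Matrix.single_mul_single_of_ne (h := hjk.symm), Matrix.single_mul_single_of_ne (h := hjk),
      Matrix.single_mul_single_same, one_mul]
    abel
  have hJP : Jm * P = Jm := by
    rw [hP, hJ, sub_mul, mul_add, mul_add, Matrix.single_mul_single_of_ne (h := hjk.symm),
      Matrix.single_mul_single_same, Matrix.single_mul_single_same,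
      Matrix.single_mul_single_of_ne (h := hjk), one_mul]
    abel
  have hJJ : Jm * Jm = -P := by
    rw [hP, hJ, sub_mul, mul_sub, mul_sub, Matrix.single_mul_single_of_ne (h := hjk.symm),
      Matrix.single_mul_single_same, Matrix.single_mul_single_same,
      Matrix.single_mul_single_of_ne (h := hjk), one_mul]
    abel
  rw [Aq_eq hjk, ← hP, ← hJ]
  rw [Matrix.transpose_add, Matrix.transpose_add, Matrix.transpose_smul, Matrix.transpose_smul,
    Matrix.transpose_smul, Matrix.transpose_one, hPt, hJt, smul_neg]
  set c1 : Polynomial ℂ := 1 + X ^ 2 with hc1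
  set al : Polynomial ℂ := -(C 2 * X ^ 2) with hal
  set be : Polynomial ℂ := C 2 * X with hbe
  have expand : (c1 • 1 + al • P + -(be • Jm)) * (c1 • 1 + al • P + be • Jm)
      = ((c1 * c1) • ((1 : Matrix (Fin m) (Fin m) (Polynomial ℂ)) * 1)
          + (c1 * al) • (1 * P) + (c1 * be) • ((1 : Matrix (Fin m) (Fin m) (Polynomial ℂ)) * Jm))
        + ((al * c1) • (P * 1) + (al * al) • (P * P) + (al * be) • (P * Jm))
        + (-((be * c1) • (Jm * 1) + (be * al) • (Jm * P) + (be * be) • (Jm * Jm))) := by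
    simp only [add_mul, mul_add, neg_mul, hmulsmul]
    abel
  rw [expand, hPP, hPJ, hJP, hJJ]
  simp only [Matrix.one_mul, Matrix.mul_one, smul_neg]
  have key : ∀ M N : Matrix (Fin m) (Fin m) (Polynomial ℂ),
      ((c1 * c1) • M + (c1 * al) • N + (c1 * be) • Jm)
        + ((al * c1) • N + (al * al) • N + (al * be) • Jm)
        + (-((be * c1) • Jm + (be * al) • Jm + -((be * be) • N)))
      = (c1 * c1) • M + (c1 * al + al * c1 + al * al + be * be) • N
        + (c1 * be - be * c1 + (al * be - be * al)) • Jm := by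
    intro M N
    simp only [add_smul, sub_smul, neg_smul]
    abel
  rw [key]
  have z1 : c1 * al + al * c1 + al * al + be * be = 0 := by
    rw [hc1, hal, hbe, show (C 2 : Polynomial ℂ) = 2 from map_ofNat C 2]; ring
  have z2 : c1 * be - be * c1 + (al * be - be * al) = 0 := by ring
  rw [z1, z2, zero_smul, zero_smul, add_zero, add_zero, pow_two]

private lemma map_smul_one {m : ℕ} (c : Polynomial ℂ) (t : ℂ) :
    (c • (1 : Matrix (Fin m) (Fin m) (Polynomial ℂ))).map ⇑(Polynomial.evalRingHom t)
      = (c.eval t) • (1 : Matrix (Fin m) (Fin m) ℂ) := by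
  apply Matrix.ext
  intro a b
  simp only [Matrix.map_apply, Matrix.smul_apply, Matrix.one_apply, smul_eq_mul, mul_ite,
    mul_one, mul_zero, Polynomial.coe_evalRingHom]
  rw [apply_ite (fun p : Polynomial ℂ => p.eval t)]
  simp


private lemma coeff_one_mul (p q : Polynomial ℂ) :
    (p * q).coeff 1 = p.coeff 0 * q.coeff 1 + p.coeff 1 * q.coeff 0 := by
  rw [Polynomial.coeff_mul, Finset.Nat.sum_antidiagonal_eq_sum_range_succ_mk]
  rw [Finset.sum_range_succ, Finset.sum_range_succ, Finset.sum_range_zero]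
  simp

private lemma coeff_one_prod {ι : Type*} [DecidableEq ι] (s : Finset ι)
    (p : ι → Polynomial ℂ) :
    (∏ i ∈ s, p i).coeff 1
      = ∑ i ∈ s, (p i).coeff 1 * ∏ i' ∈ s.erase i, (p i').coeff 0 := by
  induction s using Finset.induction_on with
  | empty => simp [Polynomial.coeff_one]
  | @insert a s ha ih =>
    have hprod0 : ∀ u : Finset ι, (∏ i ∈ u, p i).coeff 0 = ∏ i ∈ u, (p i).coeff 0 := by
      intro u
      rw [Polynomial.coeff_zero_eq_eval_zero, Polynomial.eval_prod]
      exact Finset.prod_congr rfl fun i _ => (Polynomial.coeff_zero_eq_eval_zero _).symm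
    have hterm : ∀ i ∈ s, (p i).coeff 1 * ∏ i' ∈ (insert a s).erase i, (p i').coeff 0
        = (p a).coeff 0 * ((p i).coeff 1 * ∏ i' ∈ s.erase i, (p i').coeff 0) := by
      intro i hi
      have hia : i ≠ a := fun h => ha (h ▸ hi)
      have he : (insert a s).erase i = insert a (s.erase i) := by
        ext x
        simp only [Finset.mem_erase, Finset.mem_insert]
        constructor
        · rintro ⟨hxi, hx | hx⟩
          · exact Or.inl hx
          · exact Or.inr ⟨hxi, hx⟩
        · rintro (hx | ⟨hxi, hx⟩)
          · exact ⟨hx ▸ hia.symm, Or.inl hx⟩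
          · exact ⟨hxi, Or.inr hx⟩
      have hna : a ∉ s.erase i := fun h => ha (Finset.mem_of_mem_erase h)
      rw [he, Finset.prod_insert hna]
      ring
    rw [Finset.prod_insert ha, coeff_one_mul, ih, Finset.sum_insert ha,
      Finset.erase_insert ha, hprod0, Finset.mul_sum,
      Finset.sum_congr rfl hterm]
    ring

private lemma coeff_one_even_pow (s : ℕ) :
    ((1 + X ^ 2 : Polynomial ℂ) ^ s).coeff 1 = 0 := by
  have h1 : (1 + X ^ 2 : Polynomial ℂ).coeff 1 = 0 := by
    rw [Polynomial.coeff_add, ← Polynomial.C_1, Polynomial.coeff_C, Polynomial.coeff_X_pow]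
    norm_num
  induction s with
  | zero =>
    rw [pow_zero, ← Polynomial.C_1, Polynomial.coeff_C]
    norm_num
  | succ s ih =>
    rw [pow_succ, coeff_one_mul, ih, h1]
    ring

private lemma prod_ind {m n : ℕ} (i : Fin n) (f f' : Fin n → Fin m) :
    (∏ i' ∈ Finset.univ.erase i, (if f i' = f' i' then (1 : ℂ) else 0))
      = if (∀ i', i' ≠ i → f' i' = f i') then 1 else 0 := by
  by_cases h : ∀ i', i' ≠ i → f' i' = f i'
  · rw [if_pos h]
    apply Finset.prod_eq_one
    intro i' hi'
    rw [if_pos ((h i' (Finset.ne_of_mem_erase hi')).symm)]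
  · rw [if_neg h]
    push_neg at h
    obtain ⟨i0, hi0, hne⟩ := h
    apply Finset.prod_eq_zero (i := i0)
    · exact Finset.mem_erase.mpr ⟨hi0, Finset.mem_univ _⟩
    · rw [if_neg (fun hc => hne hc.symm)]

/-- evaluated rotation matrices are orthogonal with determinant one,
    and give the `so` relation -/
lemma rot_relations {m s : ℕ} (y : Tens m s)
    (hy : ∀ A : Matrix (Fin m) (Fin m) ℂ, IsOrth A → act A y = A.det • y) :
    ∀ j k : Fin m, Aop j k y = Aop k j y := by
  intro j k
  by_cases hjk0 : j = k
  · rw [hjk0]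
  have hjk : j ≠ k := hjk0
  -- the evaluated matrix family
  set N : ℂ → Matrix (Fin m) (Fin m) ℂ :=
    fun t => (Aq m j k).map ⇑(Polynomial.evalRingHom t) with hN
  have hNapp : ∀ (t : ℂ) (a b : Fin m), N t a b = (Aq m j k a b).eval t := by
    intro t a b
    rw [hN]
    simp only [Matrix.map_apply, Polynomial.coe_evalRingHom]
  have hNorth : ∀ t : ℂ, (N t)ᵀ * N t = ((1 + t ^ 2) ^ 2) • 1 := by
    intro t
    have h1 : ((Aq m j k)ᵀ * Aq m j k).map ⇑(Polynomial.evalRingHom t)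
        = ((((1 + X ^ 2 : Polynomial ℂ)) ^ 2) •
            (1 : Matrix (Fin m) (Fin m) (Polynomial ℂ))).map ⇑(Polynomial.evalRingHom t) := by
      rw [Aq_orth hjk]
    rw [Matrix.map_mul] at h1
    rw [show ((Aq m j k)ᵀ).map ⇑(Polynomial.evalRingHom t)
        = ((Aq m j k).map ⇑(Polynomial.evalRingHom t))ᵀ from Matrix.transpose_map] at h1
    rw [hN]
    simp only
    rw [h1, map_smul_one]
    congr 1
    simp
  have hArot_orth : ∀ t : ℂ, 1 + t ^ 2 ≠ 0 → IsOrth ((1 + t ^ 2)⁻¹ • N t) := by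
    intro t ht
    unfold IsOrth
    rw [Matrix.transpose_smul, Matrix.smul_mul, Matrix.mul_smul, smul_smul, hNorth t,
      smul_smul]
    rw [show (1 + t ^ 2)⁻¹ * (1 + t ^ 2)⁻¹ * (1 + t ^ 2) ^ 2 = 1 from by field_simp]
    rw [one_smul]
  have hN0 : N 0 = 1 := by
    apply Matrix.ext
    intro a b
    rw [hN]
    simp only [Matrix.map_apply, Polynomial.coe_evalRingHom]
    rw [← Polynomial.coeff_zero_eq_eval_zero, Aq_coeff_zero hjk, Matrix.one_apply]
  -- determinant of N t
  have hdetN : ∀ t : ℂ, 1 + t ^ 2 ≠ 0 → (N t).det = (1 + t ^ 2) ^ m := by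
    set p : Polynomial ℂ := (Aq m j k).det with hp
    have hev : ∀ t : ℂ, (N t).det = p.eval t := by
      intro t
      rw [hN, hp]
      simp only
      rw [← RingHom.mapMatrix_apply, ← RingHom.map_det]
      simp only [Polynomial.coe_evalRingHom]
    have hsq : ∀ t : ℂ, 1 + t ^ 2 ≠ 0 → (p.eval t) ^ 2 = ((1 + t ^ 2) ^ m) ^ 2 := by
      intro t ht
      have horth := hArot_orth t ht
      have hdet1 : ((1 + t ^ 2)⁻¹ • N t).det * ((1 + t ^ 2)⁻¹ • N t).det = 1 := by
        have h3 := congrArg Matrix.det horth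
        rwa [Matrix.det_mul, Matrix.det_transpose, Matrix.det_one] at h3
      rw [Matrix.det_smul, Fintype.card_fin, hev] at hdet1
      have h4 : ((1 + t ^ 2)⁻¹) ^ m * ((1 + t ^ 2)⁻¹) ^ m * (p.eval t * p.eval t) = 1 := by
        linear_combination hdet1
      have h5 : p.eval t * p.eval t = (1 + t ^ 2) ^ m * (1 + t ^ 2) ^ m := by
        have hpow : ((1 + t ^ 2) : ℂ) ^ m ≠ 0 := pow_ne_zero m ht
        have hinv : (1 + t ^ 2) ^ m * ((1 + t ^ 2)⁻¹) ^ m = 1 := by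
          rw [← mul_pow, mul_inv_cancel₀ ht, one_pow]
        linear_combination ((1 + t ^ 2) ^ m * (1 + t ^ 2) ^ m) * h4
          - (p.eval t * p.eval t) * (1 + (1 + t ^ 2) ^ m * ((1 + t ^ 2)⁻¹) ^ m) * hinv
      rw [pow_two, pow_two]
      exact h5
    have hinf : {x : ℂ | Polynomial.eval x (p ^ 2)
        = Polynomial.eval x (((1 + X ^ 2) ^ m) ^ 2)}.Infinite := by
      apply Set.Infinite.mono ?_ (Set.infinite_range_of_injective
        (Nat.cast_injective (R := ℂ)))
      rintro z ⟨a, rfl⟩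
      have hgood : 1 + (a : ℂ) ^ 2 ≠ 0 := by
        have h6 : ((1 + a ^ 2 : ℕ) : ℂ) ≠ 0 := Nat.cast_ne_zero.mpr (by positivity)
        push_cast at h6
        convert h6 using 1
      show Polynomial.eval _ (p ^ 2) = Polynomial.eval _ (((1 + X ^ 2) ^ m) ^ 2)
      rw [Polynomial.eval_pow, Polynomial.eval_pow, hsq _ hgood]
      simp
    have hpq : p ^ 2 = ((1 + X ^ 2) ^ m) ^ 2 := Polynomial.eq_of_infinite_eval_eq _ _ hinf
    have hfac : (p - (1 + X ^ 2) ^ m) * (p + (1 + X ^ 2) ^ m) = 0 := by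
      linear_combination hpq
    have hpt : p = (1 + X ^ 2) ^ m := by
      rcases mul_eq_zero.mp hfac with h | h
      · exact sub_eq_zero.mp h
      · exfalso
        have h7 := congrArg (Polynomial.eval 0) h
        rw [Polynomial.eval_add, Polynomial.eval_pow] at h7
        have h8 : p.eval 0 = 1 := by
          rw [← hev 0, hN0, Matrix.det_one]
        rw [h8] at h7
        simp at h7
    intro t ht
    rw [hev, hpt]
    simp
  -- covariance of y under the evaluated family
  funext f
  have hcov : ∀ t : ℂ, 1 + t ^ 2 ≠ 0 →
      (∑ f' : Fin s → Fin m, (∏ i, N t (f i) (f' i)) * y f') = (1 + t ^ 2) ^ s * y f := by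
    intro t ht
    have hact := congrFun (hy _ (hArot_orth t ht)) f
    have hdet : ((1 + t ^ 2)⁻¹ • N t).det = 1 := by
      rw [Matrix.det_smul, Fintype.card_fin, hdetN t ht, inv_pow]
      field_simp
    rw [hdet, one_smul] at hact
    unfold act at hact
    have hprod : ∀ f' : Fin s → Fin m,
        (∏ i, ((1 + t ^ 2)⁻¹ • N t) (f i) (f' i)) = ((1 + t ^ 2)⁻¹) ^ s * ∏ i, N t (f i) (f' i) := by
      intro f'
      rw [show (fun i => ((1 + t ^ 2)⁻¹ • N t) (f i) (f' i))
          = fun i => (1 + t ^ 2)⁻¹ * N t (f i) (f' i) from rfl]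
      rw [Finset.prod_mul_distrib, Finset.prod_const, Finset.card_univ, Fintype.card_fin]
    rw [Finset.sum_congr rfl (fun f' (_ : f' ∈ Finset.univ) => by rw [hprod f'])] at hact
    have h9 : ∑ f' : Fin s → Fin m, ((1 + t ^ 2)⁻¹) ^ s * (∏ i, N t (f i) (f' i)) * y f'
        = ((1 + t ^ 2)⁻¹) ^ s * ∑ f' : Fin s → Fin m, (∏ i, N t (f i) (f' i)) * y f' := by
      rw [Finset.mul_sum]
      exact Finset.sum_congr rfl fun f' _ => by ring
    rw [h9] at hact
    have h10 : ((1 + t ^ 2) : ℂ) ^ s ≠ 0 := pow_ne_zero s ht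
    have hinv2 : (1 + t ^ 2) ^ s * ((1 + t ^ 2)⁻¹) ^ s = 1 := by
      rw [← mul_pow, mul_inv_cancel₀ ht, one_pow]
    linear_combination (1 + t ^ 2) ^ s * hact
      - (∑ f' : Fin s → Fin m, (∏ i, N t (f i) (f' i)) * y f') * hinv2
  -- the polynomial identity
  set Pf : Polynomial ℂ :=
    ∑ f' : Fin s → Fin m, (∏ i, Aq m j k (f i) (f' i)) * C (y f') with hPfdef
  have hPf : Pf = C (y f) * (1 + X ^ 2) ^ s := by
    apply Polynomial.eq_of_infinite_eval_eq
    apply Set.Infinite.mono ?_ (Set.infinite_range_of_injective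
      (Nat.cast_injective (R := ℂ)))
    rintro z ⟨a, rfl⟩
    have hgood : 1 + (a : ℂ) ^ 2 ≠ 0 := by
      have h6 : ((1 + a ^ 2 : ℕ) : ℂ) ≠ 0 := Nat.cast_ne_zero.mpr (by positivity)
      push_cast at h6
      convert h6 using 1
    show Polynomial.eval _ Pf = _
    rw [hPfdef, Polynomial.eval_finset_sum]
    have hterm : ∀ f' : Fin s → Fin m,
        Polynomial.eval (a : ℂ) ((∏ i, Aq m j k (f i) (f' i)) * C (y f'))
        = (∏ i, N (a : ℂ) (f i) (f' i)) * y f' := by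
      intro f'
      rw [Polynomial.eval_mul, Polynomial.eval_C, Polynomial.eval_prod]
      congr 1
    rw [Finset.sum_congr rfl (fun f' (_ : f' ∈ Finset.univ) => hterm f'), hcov _ hgood]
    rw [Polynomial.eval_mul, Polynomial.eval_C, Polynomial.eval_pow]
    simp only [Polynomial.eval_add, Polynomial.eval_one, Polynomial.eval_pow,
      Polynomial.eval_X]
    ring
  -- extract the coefficient of X^1
  have hc1R : (C (y f) * (1 + X ^ 2) ^ s).coeff 1 = 0 := by
    rw [mul_comm, Polynomial.coeff_mul_C, coeff_one_even_pow, zero_mul]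
  have hc1L : Pf.coeff 1
      = ∑ i : Fin s, (if f i = j then 2 * y (Function.update f i k)
          else if f i = k then -2 * y (Function.update f i j) else 0) := by
    rw [hPfdef, Polynomial.finset_sum_coeff]
    have hterm : ∀ f' : Fin s → Fin m,
        ((∏ i, Aq m j k (f i) (f' i)) * C (y f')).coeff 1
        = ∑ i : Fin s, (if (∀ i', i' ≠ i → f' i' = f i') then
            (Aq m j k (f i) (f' i)).coeff 1 * y f' else 0) := by
      intro f'
      rw [Polynomial.coeff_mul_C, coeff_one_prod, Finset.sum_mul]
      apply Finset.sum_congr rfl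
      intro i _
      have hz : (∏ i' ∈ Finset.univ.erase i, (Aq m j k (f i') (f' i')).coeff 0)
          = if (∀ i', i' ≠ i → f' i' = f i') then 1 else 0 := by
        rw [← prod_ind i f f']
        apply Finset.prod_congr rfl
        intro i' _
        rw [Aq_coeff_zero hjk]
      rw [hz, mul_ite, mul_zero, mul_one, ite_mul, zero_mul]
    rw [Finset.sum_congr rfl (fun f' (_ : f' ∈ Finset.univ) => hterm f'), Finset.sum_comm]
    apply Finset.sum_congr rfl
    intro i _
    rw [Aux.sum_update_eq i f
      (F := fun g => (Aq m j k (f i) (g i)).coeff 1 * y g)]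
    have hval : ∀ v : Fin m, (Aq m j k (f i) ((Function.update f i v) i)).coeff 1
          * y (Function.update f i v)
        = (Aq m j k (f i) v).coeff 1 * y (Function.update f i v) := by
      intro v
      rw [Function.update_self]
    rw [Finset.sum_congr rfl (fun v (_ : v ∈ Finset.univ) => hval v)]
    by_cases hij : f i = j
    · rw [if_pos hij]
      have hk : ∀ v : Fin m, (Aq m j k (f i) v).coeff 1 * y (Function.update f i v)
          = if v = k then 2 * y (Function.update f i v) else 0 := by
        intro v
        rw [Aq_coeff_one hjk]
        by_cases hvk : v = k
        · rw [if_pos ⟨hij, hvk⟩, if_pos hvk]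
        · rw [if_neg (fun hc => hvk hc.2), if_neg hvk]
          rw [if_neg, zero_mul]
          rintro ⟨h1, h2⟩
          exact hjk (hij ▸ h1 : j = k)
      rw [Finset.sum_congr rfl (fun v (_ : v ∈ Finset.univ) => hk v)]
      rw [Finset.sum_ite_eq' Finset.univ k
        (fun v => 2 * y (Function.update f i v)), if_pos (Finset.mem_univ k)]
    · rw [if_neg hij]
      by_cases hik : f i = k
      · rw [if_pos hik]
        have hk : ∀ v : Fin m, (Aq m j k (f i) v).coeff 1 * y (Function.update f i v)
            = if v = j then -2 * y (Function.update f i v) else 0 := by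
          intro v
          rw [Aq_coeff_one hjk]
          by_cases hvj : v = j
          · rw [if_neg (fun hc => hij hc.1), if_pos ⟨hik, hvj⟩, if_pos hvj]
          · rw [if_neg (fun hc => hij hc.1), if_neg (fun hc => hvj hc.2), if_neg hvj,
              zero_mul]
        rw [Finset.sum_congr rfl (fun v (_ : v ∈ Finset.univ) => hk v)]
        rw [Finset.sum_ite_eq' Finset.univ j
          (fun v => -2 * y (Function.update f i v)), if_pos (Finset.mem_univ j)]
      · have hk : ∀ v : Fin m, (Aq m j k (f i) v).coeff 1 * y (Function.update f i v) = 0 := by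
          intro v
          rw [Aq_coeff_one hjk, if_neg (fun hc => hij hc.1), if_neg (fun hc => hik hc.1),
            zero_mul]
        rw [Finset.sum_congr rfl (fun v (_ : v ∈ Finset.univ) => hk v)]
        simp [hij, hik]
  have hzero : (∑ i : Fin s, (if f i = j then 2 * y (Function.update f i k)
      else if f i = k then -2 * y (Function.update f i j) else 0)) = 0 := by
    rw [← hc1L, hPf, hc1R]
  have hsplit : ∀ i : Fin s, (if f i = j then 2 * y (Function.update f i k)
      else if f i = k then -2 * y (Function.update f i j) else 0)
      = 2 * (if f i = j then y (Function.update f i k) else 0)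
        - 2 * (if f i = k then y (Function.update f i j) else 0) := by
    intro i
    by_cases h1 : f i = j
    · rw [if_pos h1, if_pos h1, if_neg (h1 ▸ hjk : ¬ f i = k)]
      ring
    · rw [if_neg h1, if_neg h1]
      by_cases h2 : f i = k
      · rw [if_pos h2, if_pos h2]
        ring
      · rw [if_neg h2, if_neg h2]
        ring
  rw [Finset.sum_congr rfl (fun i (_ : i ∈ Finset.univ) => hsplit i),
    Finset.sum_sub_distrib, ← Finset.mul_sum, ← Finset.mul_sum] at hzero
  show (∑ i : Fin s, if f i = j then y (Function.update f i k) else 0)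
    = ∑ i : Fin s, if f i = k then y (Function.update f i j) else 0
  have h2 : (2 : ℂ) * ((∑ i : Fin s, if f i = j then y (Function.update f i k) else 0)
      - ∑ i : Fin s, if f i = k then y (Function.update f i j) else 0) = 0 := by
    linear_combination hzero
  have h3 := (mul_eq_zero.mp h2).resolve_left two_ne_zero
  exact sub_eq_zero.mp h3

end Phase2


/-- If `Λ ∈ (V^{⊗ r_c})^{G,det}` is harmonic with `(Λ,Λ) ≠ 0` and `r < r_c`, then
`(V^{⊗r})^{G,det} = 0`. -/
theorem stmt_11 (m rc r : ℕ) (L : Tens m rc)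
    (hLdet : ∀ A : Matrix (Fin m) (Fin m) ℂ, IsOrth A → act A L = A.det • L)
    (hLharm : Harmonic L) (hLnorm : form L L ≠ 0) (hr : r < rc)
    (x : Tens m r)
    (hx : ∀ A : Matrix (Fin m) (Fin m) ℂ, IsOrth A → act A x = A.det • x) :
    x = 0 := by
  classical
  by_cases hrc : rc ≤ m
  · funext f
    obtain ⟨j0, hj0⟩ : ∃ j0 : Fin m, Aux.cnt f j0 = 0 := by
      by_contra hcon
      push_neg at hcon
      have h1 : ∀ j : Fin m, 1 ≤ Aux.cnt f j := fun j => Nat.one_le_iff_ne_zero.mpr (hcon j)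
      have h2 : m ≤ ∑ j : Fin m, Aux.cnt f j := by
        calc m = ∑ _j : Fin m, 1 := by simp
          _ ≤ _ := Finset.sum_le_sum (fun j _ => h1 j)
      rw [Aux.sum_cnt] at h2
      have : r < m := lt_of_lt_of_le hr hrc
      omega
    have h0 := sign_vanish x hx f j0 (by rw [hj0]; exact Even.zero)
    simpa using h0
  · exfalso
    push_neg at hrc
    have hS : ∀ (f : Fin rc → Fin m) (j : Fin m), Even (Aux.cnt f j) → L f = 0 :=
      fun f j h => sign_vanish L hLdet f j h
    have hD : ∀ j k : Fin m, Aop j k L = Aop k j L := rot_relations L hLdet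
    have hL0 : L = 0 := phase3 L hS hD hLharm hrc
    apply hLnorm
    rw [hL0]
    simp [form]

end EnhBrauer
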